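/- arXiv:1302.4139 — 3 statements merged into one kernel-verified Lean document; each statement's English description precedes it below -/
import Mathlib

section
/- Fix 0 < α < 1 and N ≥ 1, and let q⁻ := p − sqrt(−2·ln(α)·p(1−p)/N). If 0 < q⁻ and p ≤ 1/2, then for X ~ Bin(N,p) we have P(X ≤ N·q⁻) ≤ α. -/
open Real

open Real

lemma aux_sinh (x : ℝ) (hx : 0 ≤ x) : Real.sinh x ≤ x * Real.cosh x := by
  have key : MonotoneOn (fun x : ℝ => x * Real.cosh x - Real.sinh x) (Set.Ici 0) := by
    apply monotoneOn_of_deriv_nonneg (convex_Ici 0)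
    · exact (Continuous.continuousOn (by continuity))
    · intro y hy
      exact ((hasDerivAt_id y).mul (Real.hasDerivAt_cosh y)).sub (Real.hasDerivAt_sinh y)
        |>.differentiableAt.differentiableWithinAt
    · intro y hy
      have h : HasDerivAt (fun x : ℝ => x * Real.cosh x - Real.sinh x)
          (1 * Real.cosh y + y * Real.sinh y - Real.cosh y) y :=
        ((hasDerivAt_id y).mul (Real.hasDerivAt_cosh y)).sub (Real.hasDerivAt_sinh y)
      rw [h.deriv]
      have hy0 : 0 ≤ y := le_of_lt (by simpa using hy)
      nlinarith [Real.sinh_nonneg_iff.mpr hy0]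
  have := key (Set.self_mem_Ici) (by exact hx : x ∈ Set.Ici 0) hx
  simp at this
  linarith

lemma aux_L1 (p t : ℝ) (hp0 : 0 ≤ p) (hp : p ≤ 1/2) (ht : 0 ≤ t) :
    1 - Real.exp (-t) ≤ t * (1 - p + p * Real.exp (-t)) := by
  have hx : (0:ℝ) ≤ t/2 := by linarith
  have h := aux_sinh (t/2) hx
  rw [Real.sinh_eq, Real.cosh_eq] at h
  have he : Real.exp (-t) = Real.exp (-(t/2)) * Real.exp (-(t/2)) := by
    rw [← Real.exp_add]; ring_nf
  have hee : Real.exp (t/2) * Real.exp (-(t/2)) = 1 := by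
    rw [← Real.exp_add]; simp
  have hpos : 0 < Real.exp (-(t/2)) := Real.exp_pos _
  -- 1 - exp(-t) ≤ (t/2)*(1+exp(-t))
  have key : 1 - Real.exp (-t) ≤ (t/2) * (1 + Real.exp (-t)) := by
    nlinarith [h, hpos, hee, he]
  have h1 : Real.exp (-t) ≤ 1 := Real.exp_le_one_iff.mpr (by linarith)
  nlinarith [key, mul_nonneg ht (sub_nonneg.mpr h1)]

lemma aux_L2 (p : ℝ) (hp0 : 0 < p) (hp : p ≤ 1/2) (t : ℝ) (ht : 0 ≤ t) :
    Real.log (1 - p + p * Real.exp (-t)) ≤ -p*t + p*(1-p)*t^2/2 := by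
  set g : ℝ → ℝ := fun s => -p*s + p*(1-p)*s^2/2 - Real.log (1 - p + p * Real.exp (-s)) with hg
  have hD : ∀ s : ℝ, 0 < 1 - p + p * Real.exp (-s) := by
    intro s
    have := Real.exp_pos (-s)
    nlinarith
  have hderiv : ∀ s : ℝ, HasDerivAt g
      (-p + p*(1-p)*s - (p * (-Real.exp (-s))) / (1 - p + p * Real.exp (-s))) s := by
    intro s
    have h1 : HasDerivAt (fun s : ℝ => Real.exp (-s)) (-Real.exp (-s)) s := by
      exact ((hasDerivAt_neg s).exp).congr_deriv (by ring)
    have h2 : HasDerivAt (fun s : ℝ => 1 - p + p * Real.exp (-s)) (p * (-Real.exp (-s))) s :=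
      (h1.const_mul p).const_add (1 - p)
    have h3 : HasDerivAt (fun s : ℝ => Real.log (1 - p + p * Real.exp (-s)))
        ((p * (-Real.exp (-s))) / (1 - p + p * Real.exp (-s))) s :=
      h2.log (ne_of_gt (hD s))
    have h5 : HasDerivAt (fun s : ℝ => -p*s) (-p) s := by
      simpa using (hasDerivAt_id s).const_mul (-p)
    have hpow : HasDerivAt (fun s : ℝ => s^2) (2*s) s := by
      simpa using hasDerivAt_pow 2 s
    have h6 : HasDerivAt (fun s : ℝ => p*(1-p)/2*s^2) (p*(1-p)/2*(2*s)) s :=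
      hpow.const_mul _
    have h4 : HasDerivAt (fun s : ℝ => -p*s + p*(1-p)*s^2/2) (-p + p*(1-p)*s) s := by
      exact ((h5.add h6).congr_deriv (by ring)).congr_of_eventuallyEq
        (Filter.Eventually.of_forall (fun x => by simp only [Pi.add_apply]; ring))
    exact h4.sub h3
  have hmono : MonotoneOn g (Set.Ici 0) := by
    apply monotoneOn_of_deriv_nonneg (convex_Ici 0)
    · exact fun s _ => ((hderiv s).differentiableAt.continuousAt.continuousWithinAt)
    · exact fun s _ => (hderiv s).differentiableAt.differentiableWithinAt
    · intro s hs
      rw [(hderiv s).deriv]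
      have hs0 : 0 ≤ s := le_of_lt (by simpa using hs)
      have hL1 := aux_L1 p s hp0.le hp hs0
      have hDs := hD s
      have key : (p - p*(1-p)*s) * (1 - p + p * Real.exp (-s)) ≤ p * Real.exp (-s) := by
        nlinarith [mul_nonneg (mul_nonneg hp0.le (by linarith : (0:ℝ) ≤ 1 - p))
          (sub_nonneg.mpr hL1)]
      have h7 := (le_div_iff₀ hDs).mpr key
      have heq : p * -Real.exp (-s) / (1 - p + p * Real.exp (-s))
          = -(p * Real.exp (-s) / (1 - p + p * Real.exp (-s))) := by ring
      rw [heq]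
      linarith
  have hg0 : g 0 = 0 := by simp [hg]
  have := hmono Set.self_mem_Ici (by exact ht : t ∈ Set.Ici 0) ht
  rw [hg0] at this
  simp only [hg] at this
  linarith



/-- Lower percent-point bound via Chernoff: with `q⁻ := p − sqrt(−2·ln(α)·p(1−p)/N)`,
if `0 < q⁻` and `p ≤ 1/2`, then for `X ~ Bin(N,p)` we have `P(X ≤ N·q⁻) ≤ α`. -/
theorem binomial_lower_percent_point (N : ℕ) (hN : 1 ≤ N) (p α : ℝ)
    (hα0 : 0 < α) (hα1 : α < 1)
    (hq : 0 < p - Real.sqrt (-2 * Real.log α * p * (1 - p) / N))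
    (hp : p ≤ 1 / 2) :
    ∑ k ∈ Finset.range (N + 1),
        (if (k : ℝ) ≤ (N : ℝ) * (p - Real.sqrt (-2 * Real.log α * p * (1 - p) / N))
          then (N.choose k : ℝ) * p ^ k * (1 - p) ^ (N - k) else 0)
      ≤ α := by
  set s := Real.sqrt (-2 * Real.log α * p * (1 - p) / N) with hsdef
  have hsnn : 0 ≤ s := Real.sqrt_nonneg _
  have hp0 : 0 < p := lt_of_le_of_lt hsnn (by linarith)
  have h1p : 0 < 1 - p := by linarith
  have hNpos : (0:ℝ) < N := by exact_mod_cast Nat.pos_of_ne_zero (by omega)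
  have hlogα : Real.log α < 0 := Real.log_neg hα0 hα1
  have harg : 0 < -2 * Real.log α * p * (1 - p) / N := by
    apply div_pos _ hNpos
    nlinarith [mul_pos (mul_pos (by linarith : (0:ℝ) < -2*Real.log α) hp0) h1p]
  have hs2 : s^2 = -2 * Real.log α * p * (1 - p) / N := Real.sq_sqrt harg.le
  have hspos : 0 < s := Real.sqrt_pos.mpr harg
  set t := s / (p * (1 - p)) with htdef
  have htpos : 0 < t := div_pos hspos (mul_pos hp0 h1p)
  have step1 : ∑ k ∈ Finset.range (N + 1),
        (if (k : ℝ) ≤ (N : ℝ) * (p - s)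
          then (N.choose k : ℝ) * p ^ k * (1 - p) ^ (N - k) else 0)
      ≤ ∑ k ∈ Finset.range (N + 1),
        (N.choose k : ℝ) * p ^ k * (1 - p) ^ (N - k)
          * Real.exp (t * ((N : ℝ) * (p - s) - k)) := by
    apply Finset.sum_le_sum
    intro k _
    split_ifs with h
    · have h1 : (1:ℝ) ≤ Real.exp (t * ((N : ℝ) * (p - s) - k)) :=
        Real.one_le_exp (mul_nonneg htpos.le (by linarith))
      have hnn : (0:ℝ) ≤ (N.choose k : ℝ) * p ^ k * (1 - p) ^ (N - k) := by positivity
      nlinarith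
    · positivity
  have step2 : ∑ k ∈ Finset.range (N + 1),
        (N.choose k : ℝ) * p ^ k * (1 - p) ^ (N - k)
          * Real.exp (t * ((N : ℝ) * (p - s) - k))
      = Real.exp (t * ((N : ℝ) * (p - s))) * (p * Real.exp (-t) + (1 - p)) ^ N := by
    rw [add_pow, Finset.mul_sum]
    apply Finset.sum_congr rfl
    intro k _
    have hek : Real.exp (t * ((N : ℝ) * (p - s) - k))
        = Real.exp (t * ((N : ℝ) * (p - s))) * Real.exp (-t) ^ k := by
      rw [← Real.exp_nat_mul, ← Real.exp_add]
      ring_nf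
    rw [hek, mul_pow]
    ring
  have hbase : 0 < p * Real.exp (-t) + (1 - p) := by
    have := Real.exp_pos (-t)
    nlinarith
  have step3 : (p * Real.exp (-t) + (1 - p)) ^ N
      ≤ Real.exp ((N : ℝ) * (-p*t + p*(1-p)*t^2/2)) := by
    have hL2 := aux_L2 p hp0 hp t htpos.le
    rw [show 1 - p + p * Real.exp (-t) = p * Real.exp (-t) + (1 - p) from by ring] at hL2
    calc (p * Real.exp (-t) + (1 - p)) ^ N
        = Real.exp ((N : ℝ) * Real.log (p * Real.exp (-t) + (1 - p))) := by
          rw [Real.exp_nat_mul, Real.exp_log hbase]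
      _ ≤ Real.exp ((N : ℝ) * (-p*t + p*(1-p)*t^2/2)) :=
          Real.exp_le_exp.mpr (mul_le_mul_of_nonneg_left hL2 hNpos.le)
  have key : (N : ℝ) * (t * s) = -2 * Real.log α := by
    have h2 : (N : ℝ) * s^2 = -2 * Real.log α * p * (1 - p) := by
      rw [hs2]; field_simp
    rw [htdef]
    field_simp
    linear_combination h2

  have key2 : p * (1 - p) * t^2 = t * s := by
    rw [htdef]
    field_simp
  have hexpo : t * ((N : ℝ) * (p - s)) + (N : ℝ) * (-p*t + p*(1-p)*t^2/2)
      = Real.log α := by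
    linear_combination ((N:ℝ)/2) * key2 - (1/2) * key
  calc ∑ k ∈ Finset.range (N + 1),
        (if (k : ℝ) ≤ (N : ℝ) * (p - s)
          then (N.choose k : ℝ) * p ^ k * (1 - p) ^ (N - k) else 0)
      ≤ ∑ k ∈ Finset.range (N + 1),
        (N.choose k : ℝ) * p ^ k * (1 - p) ^ (N - k)
          * Real.exp (t * ((N : ℝ) * (p - s) - k)) := step1
    _ = Real.exp (t * ((N : ℝ) * (p - s))) * (p * Real.exp (-t) + (1 - p)) ^ N := step2
    _ ≤ Real.exp (t * ((N : ℝ) * (p - s)))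
          * Real.exp ((N : ℝ) * (-p*t + p*(1-p)*t^2/2)) :=
        mul_le_mul_of_nonneg_left step3 (Real.exp_pos _).le
    _ = Real.exp (t * ((N : ℝ) * (p - s)) + (N : ℝ) * (-p*t + p*(1-p)*t^2/2)) :=
        (Real.exp_add _ _).symm
    _ = Real.exp (Real.log α) := by rw [hexpo]
    _ = α := Real.exp_log hα0
end

section
/- Let q̄⁺ := (p − ln α/N + sqrt((−p² + p − ln α/(2N))·(−2 ln α)/N)) / (1 − 2 ln α/N) for 0 < α < 1, N ≥ 1, p ∈ (0,1/2). If q̄⁺ ≤ 1/2 then for X ~ Bin(N,p), P(X ≥ N·q̄⁺) ≤ α. -/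
lemma kl_ge (p q : ℝ) (hp0 : 0 < p) (hpq : p < q) (hq2 : q ≤ 1/2) :
    (q - p)^2 / (2*q*(1-q)) ≤
      q * (Real.log q - Real.log p) + (1-q) * (Real.log (1-q) - Real.log (1-p)) := by
  have hq0 : 0 < q := hp0.trans hpq
  have hq1 : q < 1 := by linarith
  set C : ℝ := 2*q*(1-q) with hC
  have hCpos : 0 < C := by rw [hC]; nlinarith
  set g : ℝ → ℝ := fun x => q * (Real.log q - Real.log x)
      + (1-q) * (Real.log (1-q) - Real.log (1-x)) - (q-x)^2 / C with hg
  set d : ℝ → ℝ := fun x => (q * (0 - x⁻¹) + (1-q) * (0 - (1-x)⁻¹ * (0 - 1)))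
      - (2*(q-x)^1*(0-1)) / C with hd
  have hderiv : ∀ x ∈ Set.Icc p q, HasDerivAt g (d x) x := by
    intro x hx
    have hx0 : x ≠ 0 := by have := hx.1; intro h; linarith [hp0]
    have hx1 : (1:ℝ) - x ≠ 0 := by have := hx.2; intro h; linarith
    have h1 : HasDerivAt (fun x : ℝ => Real.log x) x⁻¹ x := Real.hasDerivAt_log hx0
    have h2 : HasDerivAt (fun x : ℝ => (1:ℝ) - x) (0 - 1) x :=
      (hasDerivAt_const x (1:ℝ)).sub (hasDerivAt_id x)
    have h3 : HasDerivAt (fun x : ℝ => Real.log (1 - x)) ((1-x)⁻¹ * (0 - 1)) x :=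
      (Real.hasDerivAt_log hx1).comp x h2
    have h4 : HasDerivAt (fun x : ℝ => (q - x)) (0 - 1) x :=
      (hasDerivAt_const x q).sub (hasDerivAt_id x)
    have h5 : HasDerivAt (fun x : ℝ => (q - x)^2 / C) ((2*(q-x)^1*(0-1))/C) x := by
      have := h4.pow 2
      simpa using this.div_const C
    have h6 : HasDerivAt (fun x : ℝ => Real.log q - Real.log x) (0 - x⁻¹) x :=
      (hasDerivAt_const x (Real.log q)).sub h1
    have h7 : HasDerivAt (fun x : ℝ => Real.log (1-q) - Real.log (1-x))
        (0 - (1-x)⁻¹ * (0 - 1)) x := (hasDerivAt_const x (Real.log (1-q))).sub h3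
    exact ((h6.const_mul q).add (h7.const_mul (1-q))).sub h5
  have hanti : AntitoneOn g (Set.Icc p q) := by
    apply antitoneOn_of_deriv_nonpos (convex_Icc p q)
    · exact fun x hx => (hderiv x hx).differentiableAt.continuousAt.continuousWithinAt
    · rw [interior_Icc]
      exact fun x hx => (hderiv x (Set.Ioo_subset_Icc_self hx)).differentiableAt.differentiableWithinAt
    · rw [interior_Icc]
      intro x hx
      rw [(hderiv x (Set.Ioo_subset_Icc_self hx)).deriv]
      have hx0 : 0 < x := lt_trans hp0 hx.1
      have hx1 : 0 < 1 - x := by have := hx.2; linarith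
      have e1 : d x = (-2*(q-x)^2*(1-q-x)) / (x*(1-x)*C) := by
        rw [hd]
        field_simp
        ring
      rw [e1]
      apply div_nonpos_of_nonpos_of_nonneg
      · nlinarith [hx.2, sq_nonneg (q-x)]
      · positivity
  have hgq : g q = 0 := by simp [hg]
  have := hanti (Set.left_mem_Icc.2 hpq.le) (Set.right_mem_Icc.2 hpq.le) hpq.le
  rw [hgq] at this
  have : 0 ≤ g p := this
  rw [hg] at this
  simp only at this
  linarith

lemma chernoff (N : ℕ) (p q : ℝ) (hp0 : 0 < p) (hpq : p < q) (hq2 : q ≤ 1/2) :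
    ∑ k ∈ Finset.range (N+1),
        (if (N:ℝ)*q ≤ (k:ℝ) then (N.choose k : ℝ) * p^k * (1-p)^(N-k) else 0)
      ≤ Real.exp (-(N:ℝ) * (q * (Real.log q - Real.log p)
          + (1-q) * (Real.log (1-q) - Real.log (1-p)))) := by
  have hq0 : 0 < q := hp0.trans hpq
  have hq1 : q < 1 := by linarith
  have hp1 : p < 1 := by linarith
  have h1p : 0 < 1 - p := by linarith
  have h1q : 0 < 1 - q := by linarith
  set r : ℝ := q*(1-p)/(p*(1-q)) with hr
  have hrpos : 0 < r := by positivity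
  have hr1 : 1 ≤ r := by
    rw [hr, le_div_iff₀ (by positivity)]
    nlinarith
  have step1 : ∑ k ∈ Finset.range (N+1),
        (if (N:ℝ)*q ≤ (k:ℝ) then (N.choose k : ℝ) * p^k * (1-p)^(N-k) else 0)
      ≤ ∑ k ∈ Finset.range (N+1),
        ((N.choose k : ℝ) * (p*r)^k * (1-p)^(N-k)) * r ^ (-((N:ℝ)*q)) := by
    apply Finset.sum_le_sum
    intro k _
    have key : (N.choose k:ℝ) * p^k * (1-p)^(N-k) * r ^ ((k:ℝ) - (N:ℝ)*q)
        = ((N.choose k:ℝ) * (p*r)^k * (1-p)^(N-k)) * r^(-((N:ℝ)*q)) := by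
      rw [show (k:ℝ) - (N:ℝ)*q = (k:ℝ) + -((N:ℝ)*q) from sub_eq_add_neg _ _,
        Real.rpow_add hrpos, Real.rpow_natCast, mul_pow]; ring
    split_ifs with h
    · have h1 : (1:ℝ) ≤ r ^ ((k:ℝ) - (N:ℝ)*q) := by
        have := Real.rpow_le_rpow_of_exponent_le hr1 (sub_nonneg.2 h)
        rwa [Real.rpow_zero] at this
      calc (N.choose k:ℝ) * p^k * (1-p)^(N-k)
          ≤ (N.choose k:ℝ) * p^k * (1-p)^(N-k) * r ^ ((k:ℝ) - (N:ℝ)*q) :=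
            le_mul_of_one_le_right (by positivity) h1
        _ = _ := key
    · positivity
  have step2 : ∑ k ∈ Finset.range (N+1),
        ((N.choose k : ℝ) * (p*r)^k * (1-p)^(N-k)) * r ^ (-((N:ℝ)*q))
      = (p*r + (1-p))^N * r ^ (-((N:ℝ)*q)) := by
    rw [← Finset.sum_mul]
    congr 1
    rw [add_pow]
    apply Finset.sum_congr rfl
    intros; ring
  have hval : p*r + (1-p) = (1-p)/(1-q) := by
    rw [hr]; field_simp; ring
  have step3 : (p*r + (1-p))^N * r ^ (-((N:ℝ)*q))
      = Real.exp (-(N:ℝ) * (q * (Real.log q - Real.log p)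
          + (1-q) * (Real.log (1-q) - Real.log (1-p)))) := by
    rw [hval]
    have hd : (0:ℝ) < (1-p)/(1-q) := by positivity
    have e1 : ((1-p)/(1-q))^N = Real.exp ((N:ℝ) * Real.log ((1-p)/(1-q))) := by
      rw [Real.exp_nat_mul, Real.exp_log hd]
    have e2 : r ^ (-((N:ℝ)*q)) = Real.exp (Real.log r * (-((N:ℝ)*q))) :=
      Real.rpow_def_of_pos hrpos _
    rw [e1, e2, ← Real.exp_add]
    congr 1
    have lr : Real.log r = (Real.log q - Real.log p) + (Real.log (1-p) - Real.log (1-q)) := by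
      rw [hr, Real.log_div (by positivity) (by positivity), Real.log_mul hq0.ne' h1p.ne',
        Real.log_mul hp0.ne' h1q.ne']
      ring
    have ld : Real.log ((1-p)/(1-q)) = Real.log (1-p) - Real.log (1-q) :=
      Real.log_div h1p.ne' h1q.ne'
    rw [lr, ld]; ring
  calc _ ≤ _ := step1
    _ = _ := step2
    _ = _ := step3

/-- Upper percent-point bound via Chernoff: with
`q̄⁺ := (p − ln α/N + sqrt((−p² + p − ln α/(2N))·(−2 ln α)/N)) / (1 − 2 ln α/N)`,
if `q̄⁺ ≤ 1/2` then for `X ~ Bin(N,p)` we have `P(X ≥ N·q̄⁺) ≤ α`. -/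
theorem binomial_upper_percent_point (N : ℕ) (hN : 1 ≤ N) (p α : ℝ)
    (hα0 : 0 < α) (hα1 : α < 1) (hp0 : 0 < p) (hp2 : p < 1 / 2)
    (hq : (p - Real.log α / N +
        Real.sqrt ((-p ^ 2 + p - Real.log α / (2 * N)) * (-2 * Real.log α) / N)) /
        (1 - 2 * Real.log α / N) ≤ 1 / 2) :
    ∑ k ∈ Finset.range (N + 1),
        (if (N : ℝ) * ((p - Real.log α / N +
              Real.sqrt ((-p ^ 2 + p - Real.log α / (2 * N)) * (-2 * Real.log α) / N)) /
              (1 - 2 * Real.log α / N)) ≤ (k : ℝ)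
          then (N.choose k : ℝ) * p ^ k * (1 - p) ^ (N - k) else 0)
      ≤ α := by
  have hNpos : (0:ℝ) < N := by exact_mod_cast hN
  have hN0 : (N:ℝ) ≠ 0 := hNpos.ne'
  set L : ℝ := Real.log α with hLdef
  have hL : L < 0 := Real.log_neg hα0 hα1
  set s : ℝ := Real.sqrt ((-p ^ 2 + p - L / (2 * N)) * (-2 * L) / N) with hsdef
  set q : ℝ := (p - L / N + s) / (1 - 2 * L / N) with hqdef
  have hnegL : 0 < -L := by linarith
  have hLN : L / N < 0 := div_neg_of_neg_of_pos hL hNpos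
  have hden : 0 < 1 - 2 * L / N := by
    have h2 : 2 * L / N = 2 * (L / N) := by ring
    rw [h2]; linarith
  have h1 : 0 < -p ^ 2 + p - L / (2 * N) := by
    have hdiv : 0 < -L / (2 * N) := div_pos hnegL (by positivity)
    rw [neg_div] at hdiv
    nlinarith [mul_pos hp0 (show (0:ℝ) < 1 - p by linarith)]
  have hdisc : 0 ≤ (-p ^ 2 + p - L / (2 * N)) * (-2 * L) / N :=
    div_nonneg (mul_nonneg h1.le (by linarith)) hNpos.le
  have hs0 : 0 ≤ s := Real.sqrt_nonneg _
  have hs2 : s ^ 2 = (-p ^ 2 + p - L / (2 * N)) * (-2 * L) / N := by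
    rw [hsdef, sq, Real.mul_self_sqrt hdisc]
  have hqe : q * (1 - 2 * L / N) = p - L / N + s := div_mul_cancel₀ _ hden.ne'
  have hpq : p < q := by
    rw [hqdef, lt_div_iff₀ hden]
    have hkey : L/N * (1 - 2*p) < 0 := mul_neg_of_neg_of_pos hLN (by linarith)
    have e : p - L/N + s - p * (1 - 2*L/N) = -(L/N * (1-2*p)) + s := by ring
    linarith [hkey, hs0, e]
  have hq0 : 0 < q := lt_trans hp0 hpq
  have hq1 : q < 1 := by linarith [hq]
  have key : (q - p) ^ 2 = (-2 * L / N) * (q * (1 - q)) := by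
    have expand : (1 - 2 * L / N) * ((q - p) ^ 2 - (-2 * L / N) * (q * (1 - q)))
        = (q * (1 - 2 * L / N) - (p - L / N)) ^ 2
          - (-p ^ 2 + p - L / (2 * N)) * (-2 * L) / N := by
      field_simp
      ring
    rw [hqe] at expand
    have hz : (1 - 2 * L / N) * ((q - p) ^ 2 - (-2 * L / N) * (q * (1 - q))) = 0 := by
      rw [expand, ← hs2]; ring
    have := mul_eq_zero.1 hz
    rcases this with h | h
    · exact absurd h hden.ne'
    · linarith [sub_eq_zero.1 h]
  have hratio : (q - p) ^ 2 / (2 * q * (1 - q)) = -L / N := by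
    rw [key]
    have hpos : (0:ℝ) < 2 * q * (1 - q) := by
      nlinarith [mul_pos hq0 (show (0:ℝ) < 1 - q by linarith)]
    have h1q : (1:ℝ) - q ≠ 0 := by linarith
    field_simp
  have hkl := kl_ge p q hp0 hpq hq
  have hexp : Real.exp (-(N:ℝ) * (q * (Real.log q - Real.log p)
      + (1 - q) * (Real.log (1 - q) - Real.log (1 - p)))) ≤ α := by
    rw [← Real.exp_log hα0]
    apply Real.exp_le_exp.2
    have h1 : -L / N ≤ q * (Real.log q - Real.log p)
        + (1 - q) * (Real.log (1 - q) - Real.log (1 - p)) := hratio ▸ hkl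
    have h2 : -L ≤ (N:ℝ) * (q * (Real.log q - Real.log p)
        + (1 - q) * (Real.log (1 - q) - Real.log (1 - p))) := by
      rw [div_le_iff₀ hNpos] at h1
      linarith
    linarith
  exact le_trans (chernoff N p q hp0 hpq hq) hexp
end

section
/- Let ρ_{f(A),E} = p₀|0⟩⟨0|⊗ρ₀ + p₁|1⟩⟨1|⊗ρ₁ with p₀+p₁=1, p₀,p₁>0, and let ρ_E = p₀ρ₀ + p₁ρ₁. Then for any operator T with 0 ≤ T ≤ I on the E system, ‖ρ_{f(A),E} − ρ_{f(A)}⊗ρ_E‖₁ ≥ 4p₀p₁·|Tr ρ₀T − Tr ρ₁T|. -/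
open Matrix Kronecker ComplexOrder

/-- Trace norm of a Hermitian matrix: the sum of absolute values of its eigenvalues. -/
noncomputable def traceNorm {n : Type*} [Fintype n] [DecidableEq n]
    (A : Matrix n n ℂ) (hA : A.IsHermitian) : ℝ :=
  ∑ i, |hA.eigenvalues i|

/-- The cq-state `ρ_{f(A),E} = p₀|0⟩⟨0|⊗ρ₀ + p₁|1⟩⟨1|⊗ρ₁`. -/
noncomputable def rhoFAE {d : ℕ} (p₀ p₁ : ℝ) (ρ₀ ρ₁ : Matrix (Fin d) (Fin d) ℂ) :
    Matrix (Fin 2 × Fin d) (Fin 2 × Fin d) ℂ :=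
  (p₀ : ℂ) • (Matrix.single (0 : Fin 2) (0 : Fin 2) (1 : ℂ) ⊗ₖ ρ₀)
    + (p₁ : ℂ) • (Matrix.single (1 : Fin 2) (1 : Fin 2) (1 : ℂ) ⊗ₖ ρ₁)

/-- The product state `ρ_{f(A)} ⊗ ρ_E` where `ρ_{f(A)} = p₀|0⟩⟨0| + p₁|1⟩⟨1|` and
`ρ_E = p₀ρ₀ + p₁ρ₁`. -/
noncomputable def rhoFAtimesE {d : ℕ} (p₀ p₁ : ℝ) (ρ₀ ρ₁ : Matrix (Fin d) (Fin d) ℂ) :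
    Matrix (Fin 2 × Fin d) (Fin 2 × Fin d) ℂ :=
  (Matrix.single (0 : Fin 2) (0 : Fin 2) (p₀ : ℂ)
      + Matrix.single (1 : Fin 2) (1 : Fin 2) (p₁ : ℂ))
    ⊗ₖ ((p₀ : ℂ) • ρ₀ + (p₁ : ℂ) • ρ₁)

namespace TraceNormAux

lemma psd_diag {n : Type*} [Fintype n] [DecidableEq n] {X : Matrix n n ℂ}
    (hX : X.PosSemidef) (i : n) : 0 ≤ X i i := by
  have := hX.dotProduct_mulVec_nonneg (Pi.single i 1)
  simpa [dotProduct, mulVec, Pi.single_apply, Finset.sum_ite_eq, Finset.sum_ite_eq'] using this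

lemma trace_bound {n : Type*} [Fintype n] [DecidableEq n] {A M : Matrix n n ℂ}
    (hA : A.IsHermitian) (h1 : ((1:Matrix n n ℂ) - M).PosSemidef)
    (h2 : ((1:Matrix n n ℂ) + M).PosSemidef) :
    |((A * M).trace).re| ≤ ∑ i, |hA.eigenvalues i| := by
  set V : Matrix n n ℂ := (hA.eigenvectorUnitary : Matrix n n ℂ) with hVdef
  have hV : star V * V = 1 := Matrix.mem_unitaryGroup_iff'.mp hA.eigenvectorUnitary.2
  set N : Matrix n n ℂ := star V * M * V with hN
  have hNsub : star V * ((1:Matrix n n ℂ) - M) * V = 1 - N := by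
    rw [Matrix.mul_sub, Matrix.sub_mul, Matrix.mul_one, hV, hN]
  have hNadd : star V * ((1:Matrix n n ℂ) + M) * V = 1 + N := by
    rw [Matrix.mul_add, Matrix.add_mul, Matrix.mul_one, hV, hN]
  have hdiag : ∀ i, |(N i i).re| ≤ 1 := by
    intro i
    have hs := psd_diag (hNsub ▸ h1.conjTranspose_mul_mul_same V) i
    have ha := psd_diag (hNadd ▸ h2.conjTranspose_mul_mul_same V) i
    rw [Complex.le_def] at hs ha
    simp only [Matrix.sub_apply, Matrix.add_apply, Matrix.one_apply_eq, Complex.sub_re,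
      Complex.add_re, Complex.one_re, Complex.zero_re] at hs ha
    rw [abs_le]; constructor <;> linarith
  have htr : (A * M).trace = ∑ i, (hA.eigenvalues i : ℂ) * N i i := by
    conv_lhs => rw [hA.spectral_theorem, Unitary.conjStarAlgAut_apply]
    rw [← hVdef, Matrix.mul_assoc, Matrix.trace_mul_comm, ← Matrix.mul_assoc, ← hN,
      Matrix.trace_mul_comm]
    simp [Matrix.trace, Matrix.diag, Matrix.diagonal_mul]
  rw [htr, Complex.re_sum]
  calc |∑ i, ((hA.eigenvalues i : ℂ) * N i i).re| ≤ ∑ i, |((hA.eigenvalues i : ℂ) * N i i).re| :=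
        Finset.abs_sum_le_sum_abs _ _
    _ ≤ ∑ i, |hA.eigenvalues i| := by
        apply Finset.sum_le_sum
        intro i _
        have h : ((hA.eigenvalues i : ℂ) * N i i).re = hA.eigenvalues i * (N i i).re := by
          simp [Complex.mul_re]
        rw [h, abs_mul]
        calc |hA.eigenvalues i| * |(N i i).re| ≤ |hA.eigenvalues i| * 1 :=
              mul_le_mul_of_nonneg_left (hdiag i) (abs_nonneg _)
          _ = _ := mul_one _

lemma sub_kron {l m d : ℕ} (A B : Matrix (Fin l) (Fin m) ℂ) (C : Matrix (Fin d) (Fin d) ℂ) :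
    (A - B) ⊗ₖ C = A ⊗ₖ C - B ⊗ₖ C := by
  ext ⟨a,b⟩ ⟨c,e⟩; simp [kroneckerMap_apply, sub_mul]

lemma kron_sub {l m d : ℕ} (A : Matrix (Fin l) (Fin m) ℂ) (B C : Matrix (Fin d) (Fin d) ℂ) :
    A ⊗ₖ (B - C) = A ⊗ₖ B - A ⊗ₖ C := by
  ext ⟨a,b⟩ ⟨c,e⟩; simp [kroneckerMap_apply, mul_sub]

lemma psd_kron_std {d : ℕ} (i : Fin 2) {S : Matrix (Fin d) (Fin d) ℂ} (hS : S.PosSemidef) :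
    (Matrix.single i i (1:ℂ) ⊗ₖ S).PosSemidef := by
  rw [posSemidef_iff_dotProduct_mulVec]
  constructor
  · ext ⟨a,b⟩ ⟨c,e⟩
    simp only [conjTranspose_apply, kroneckerMap_apply, star_mul',
      (show (Matrix.single i i (1:ℂ)).IsHermitian by
        ext a b; simp [conjTranspose_apply, Matrix.single, and_comm]).apply, hS.1.apply]
  · intro x
    have key : star x ⬝ᵥ ((Matrix.single i i (1:ℂ) ⊗ₖ S) *ᵥ x)
        = star (fun b => x (i, b)) ⬝ᵥ (S *ᵥ fun b => x (i, b)) := by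
      simp [dotProduct, mulVec, Matrix.single, Fintype.sum_prod_type,
        Finset.mul_sum, Finset.sum_mul, Matrix.kroneckerMap_apply, ite_and]
    rw [key]; exact hS.dotProduct_mulVec_nonneg _

lemma psd_two_smul {d : ℕ} {S : Matrix (Fin d) (Fin d) ℂ} (hS : S.PosSemidef) :
    ((2:ℂ) • S).PosSemidef := by
  rw [two_smul]; exact hS.add hS

end TraceNormAux

open TraceNormAux in
/-- For density operators `ρ₀, ρ₁` and any POVM element `0 ≤ T ≤ I` on the E system,
`‖ρ_{f(A),E} − ρ_{f(A)}⊗ρ_E‖₁ ≥ 4p₀p₁·|Tr ρ₀T − Tr ρ₁T|`. -/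
theorem traceNorm_ge_four_p0_p1 {d : ℕ}
    (ρ₀ ρ₁ : Matrix (Fin d) (Fin d) ℂ)
    (hρ₀ : ρ₀.PosSemidef) (hρ₁ : ρ₁.PosSemidef)
    (htr₀ : ρ₀.trace = 1) (htr₁ : ρ₁.trace = 1)
    (p₀ p₁ : ℝ) (hp₀ : 0 < p₀) (hp₁ : 0 < p₁) (hsum : p₀ + p₁ = 1)
    (T : Matrix (Fin d) (Fin d) ℂ) (hT : T.PosSemidef)
    (hT1 : ((1 : Matrix (Fin d) (Fin d) ℂ) - T).PosSemidef)
    (hHerm : (rhoFAE p₀ p₁ ρ₀ ρ₁ - rhoFAtimesE p₀ p₁ ρ₀ ρ₁).IsHermitian) :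
    4 * p₀ * p₁ * |((ρ₀ * T).trace).re - ((ρ₁ * T).trace).re|
      ≤ traceNorm (rhoFAE p₀ p₁ ρ₀ ρ₁ - rhoFAtimesE p₀ p₁ ρ₀ ρ₁) hHerm := by
  set E00 := Matrix.single (0 : Fin 2) (0 : Fin 2) (1 : ℂ) with hE00
  set E11 := Matrix.single (1 : Fin 2) (1 : Fin 2) (1 : ℂ) with hE11
  set K : Matrix (Fin 2) (Fin 2) ℂ := E00 - E11 with hK
  set σ : Matrix (Fin d) (Fin d) ℂ := ρ₀ - ρ₁ with hσ
  set τ : Matrix (Fin d) (Fin d) ℂ := (2:ℂ) • T - 1 with hτ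
  set M : Matrix (Fin 2 × Fin d) (Fin 2 × Fin d) ℂ := K ⊗ₖ τ with hM
  -- Fin 2 facts
  have hone2 : (1 : Matrix (Fin 2) (Fin 2) ℂ) = E00 + E11 := by
    ext i j; fin_cases i <;> fin_cases j <;>
      simp [hE00, hE11, Matrix.one_apply, Matrix.single]
  have hKK : K * K = 1 := by
    ext i j; fin_cases i <;> fin_cases j <;>
      simp [hK, hE00, hE11, Matrix.mul_apply, Fin.sum_univ_two, Matrix.single,
        Matrix.one_apply, Matrix.sub_apply]
  -- difference in Kronecker form
  have hΔ : rhoFAE p₀ p₁ ρ₀ ρ₁ - rhoFAtimesE p₀ p₁ ρ₀ ρ₁ = ((p₀*p₁ : ℝ) : ℂ) • (K ⊗ₖ σ) := by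
    have hc : (p₁:ℂ) = 1 - (p₀:ℂ) := by
      have : p₁ = 1 - p₀ := by linarith
      exact_mod_cast this
    rw [rhoFAE, rhoFAtimesE, hK, hσ, ← hE00, ← hE11]
    rw [show Matrix.single (0:Fin 2) (0:Fin 2) ((p₀:ℂ)) = (p₀:ℂ) • E00 by
        rw [hE00, Matrix.smul_single]; norm_num,
      show Matrix.single (1:Fin 2) (1:Fin 2) ((p₁:ℂ)) = (p₁:ℂ) • E11 by
        rw [hE11, Matrix.smul_single]; norm_num]
    simp only [Matrix.add_kronecker, Matrix.kronecker_add, Matrix.smul_kronecker,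
      Matrix.kronecker_smul, sub_kron, kron_sub]
    push_cast
    rw [hc]
    module
  -- PSD of 1 - M
  have hsub : ((1 : Matrix (Fin 2 × Fin d) (Fin 2 × Fin d) ℂ) - M).PosSemidef := by
    have heq : (1 : Matrix (Fin 2 × Fin d) (Fin 2 × Fin d) ℂ) - M
        = E00 ⊗ₖ ((2:ℂ) • ((1 : Matrix (Fin d) (Fin d) ℂ) - T)) + E11 ⊗ₖ ((2:ℂ) • T) := by
      rw [← Matrix.one_kronecker_one, hone2, hM, hK, hτ]
      simp only [Matrix.add_kronecker, Matrix.kronecker_add, sub_kron, kron_sub,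
        Matrix.kronecker_smul, Matrix.smul_kronecker]
      module
    rw [heq]
    exact (psd_kron_std 0 (psd_two_smul hT1)).add (psd_kron_std 1 (psd_two_smul hT))
  have hadd : ((1 : Matrix (Fin 2 × Fin d) (Fin 2 × Fin d) ℂ) + M).PosSemidef := by
    have heq : (1 : Matrix (Fin 2 × Fin d) (Fin 2 × Fin d) ℂ) + M
        = E00 ⊗ₖ ((2:ℂ) • T) + E11 ⊗ₖ ((2:ℂ) • ((1 : Matrix (Fin d) (Fin d) ℂ) - T)) := by
      rw [← Matrix.one_kronecker_one, hone2, hM, hK, hτ]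
      simp only [Matrix.add_kronecker, Matrix.kronecker_add, sub_kron, kron_sub,
        Matrix.kronecker_smul, Matrix.smul_kronecker]
      module
    rw [heq]
    exact (psd_kron_std 0 (psd_two_smul hT)).add (psd_kron_std 1 (psd_two_smul hT1))
  -- trace value
  have htrace : (((rhoFAE p₀ p₁ ρ₀ ρ₁ - rhoFAtimesE p₀ p₁ ρ₀ ρ₁) * M).trace).re
      = 4 * p₀ * p₁ * (((ρ₀ * T).trace).re - ((ρ₁ * T).trace).re) := by
    rw [hΔ, Matrix.smul_mul, Matrix.trace_smul, hM, ← Matrix.mul_kronecker_mul, hKK,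
      Matrix.trace_kronecker]
    have htr1 : (1 : Matrix (Fin 2) (Fin 2) ℂ).trace = 2 := by
      simp [Matrix.trace_one]
    have hστ : (σ * τ).trace = 2 * ((ρ₀ * T).trace - (ρ₁ * T).trace) := by
      rw [hσ, hτ, Matrix.sub_mul, Matrix.mul_sub, Matrix.mul_sub, Matrix.mul_smul,
        Matrix.mul_smul, Matrix.mul_one, Matrix.mul_one]
      rw [Matrix.trace_sub, Matrix.trace_sub, Matrix.trace_sub, Matrix.trace_smul,
        Matrix.trace_smul, htr₀, htr₁]
      ring_nf
    rw [htr1, hστ]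
    have : ((p₀*p₁ : ℝ) : ℂ) • (2 * (2 * ((ρ₀ * T).trace - (ρ₁ * T).trace)))
        = ((p₀*p₁ : ℝ) : ℂ) * (2 * (2 * ((ρ₀ * T).trace - (ρ₁ * T).trace))) := rfl
    rw [this, Complex.re_ofReal_mul]
    simp [Complex.sub_re]
    ring
  -- conclude
  have key := trace_bound hHerm hsub hadd
  rw [traceNorm]
  refine le_trans ?_ key
  rw [htrace, abs_mul]
  have h4 : |4 * p₀ * p₁| = 4 * p₀ * p₁ := abs_of_pos (by positivity)
  rw [h4]
end
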